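/- Let B be a finite list of bids on n goods all of whose value vectors lie in ℤ^n, let p ∈ ℤ^n, and suppose B is locally valid at p. Fix a good i ∈ {1,…,n} and ε with 0 < |ε| < 1/4. Then: (a) B is (1/2 − |ε|)-valid at every q ∈ ℝ^n with ‖q − p‖_∞ < |ε|; and (b) the shifted bid list B_ε := { (b + ε·e^i, w) : (b,w) ∈ B } is (1/2 − 2|ε|)-valid at every q ∈ ℝ^n with ‖q − p‖_∞ < |ε|, where e^i is the i-th standard basis vector of ℝ^n. -/

import Mathlib

open Finset

noncomputable section

variable {n : ℕ}

/-- Extend a value/price vector in `ℝ^n` by a 0-th coordinate (the reject good) equal to 0. -/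
def extVec (b : Fin n → ℝ) : Fin (n + 1) → ℝ := Fin.cons 0 b

/-- Surplus of good `i` (in `{0,…,n}`) for value vector `b` at price `p`. -/
def surplus (b p : Fin n → ℝ) (i : Fin (n + 1)) : ℝ := extVec b i - extVec p i

/-- Maximal surplus over all goods (including the reject good). -/
def maxSurplus (b p : Fin n → ℝ) : ℝ :=
  Finset.univ.sup' Finset.univ_nonempty (surplus b p)

/-- The bid with value vector `b` demands good `i` at price `p`. -/
def Demands (b p : Fin n → ℝ) (i : Fin (n + 1)) : Prop :=
  ∀ j, surplus b p j ≤ surplus b p i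

open Classical in
/-- The set of goods demanded by value vector `b` at price `p`. -/
def demandedSet (b p : Fin n → ℝ) : Finset (Fin (n + 1)) :=
  Finset.univ.filter fun i => Demands b p i

/-- Indirect utility function of a bid list (bids are pairs of value vector and weight). -/
def indirectUtility (B : List ((Fin n → ℝ) × ℝ)) (p : Fin n → ℝ) : ℝ :=
  (B.map fun bw => bw.2 * maxSurplus bw.1 p).sum

/-- Surplus gap of the bid `b` at `p`: maximal surplus minus the best surplus on
a non-demanded good (junk value when every good is demanded). -/
def surplusGap (b p : Fin n → ℝ) : ℝ :=
  maxSurplus b p - sSup (surplus b p '' {i | i ∉ demandedSet b p})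

/-- `B` is `ε`-valid at `p` if its indirect utility function is convex on the open
`L∞`-ball of radius `ε` around `p`. -/
def epsValid (B : List ((Fin n → ℝ) × ℝ)) (p : Fin n → ℝ) (ε : ℝ) : Prop :=
  ConvexOn ℝ {q : Fin n → ℝ | ‖q - p‖ < ε} (indirectUtility B)

open Classical in
/-- Sum of the weights of bids in `B` that are marginal on both `i` and `i'` at `p`. -/
def marginalWeight (B : List ((Fin n → ℝ) × ℝ)) (p : Fin n → ℝ) (i i' : Fin (n + 1)) : ℝ :=
  (B.map fun bw => if Demands bw.1 p i ∧ Demands bw.1 p i' then bw.2 else 0).sum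


lemma demandedSet_nonempty (b p : Fin n → ℝ) : (demandedSet b p).Nonempty := by
  classical
  obtain ⟨j, hj, hEq⟩ := Finset.exists_mem_eq_sup' (Finset.univ_nonempty) (surplus b p)
  exact ⟨j, by
    simp only [demandedSet, Finset.mem_filter, Finset.mem_univ, true_and]
    intro k
    rw [← hEq]
    exact Finset.le_sup' _ (Finset.mem_univ k)⟩

lemma surplus_int {b p : Fin n → ℝ} (hb : ∀ k, ∃ m : ℤ, b k = m)
    (hp : ∀ k, ∃ m : ℤ, p k = m) (j : Fin (n + 1)) : ∃ m : ℤ, surplus b p j = m := by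
  induction j using Fin.cases with
  | zero => exact ⟨0, by simp [surplus, extVec]⟩
  | succ k =>
    obtain ⟨m1, h1⟩ := hb k
    obtain ⟨m2, h2⟩ := hp k
    exact ⟨m1 - m2, by simp [surplus, extVec, h1, h2]⟩

lemma extVec_abs_le {p q : Fin n → ℝ} (j : Fin (n + 1)) :
    |extVec p j - extVec q j| ≤ ‖q - p‖ := by
  induction j using Fin.cases with
  | zero => simp [extVec]
  | succ k =>
    have := norm_le_pi_norm (q - p) k
    simp only [Pi.sub_apply, Real.norm_eq_abs] at this
    simp only [extVec, Fin.cons_succ]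
    rw [abs_sub_comm]
    exact this

lemma surplus_mem_demanded {b p : Fin n → ℝ} {j : Fin (n + 1)}
    (hj : j ∈ demandedSet b p) : surplus b p j = maxSurplus b p := by
  classical
  simp only [demandedSet, Finset.mem_filter] at hj
  refine le_antisymm (Finset.le_sup' _ (Finset.mem_univ j)) ?_
  exact Finset.sup'_le _ _ fun k _ => hj.2 k

/-- Key identity: for integral `b, p` and `q` within `1/2` of `p`,
the max surplus at `q` is governed by the demanded set at `p`. -/
lemma maxSurplus_eq {b p : Fin n → ℝ} (hb : ∀ k, ∃ m : ℤ, b k = m)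
    (hp : ∀ k, ∃ m : ℤ, p k = m) {q : Fin n → ℝ} (hq : ‖q - p‖ < 1 / 2) :
    maxSurplus b q = maxSurplus b p +
      (demandedSet b p).sup' (demandedSet_nonempty b p)
        (fun j => extVec p j - extVec q j) := by
  classical
  refine le_antisymm ?_ ?_
  · refine Finset.sup'_le _ _ fun j _ => ?_
    have hkey : surplus b q j = surplus b p j + (extVec p j - extVec q j) := by
      simp only [surplus]; ring
    by_cases hjD : j ∈ demandedSet b p
    · rw [hkey, surplus_mem_demanded hjD]
      exact add_le_add_right (Finset.le_sup' (fun j => extVec p j - extVec q j) hjD) _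
    · -- j not demanded: integral gap ≥ 1
      have hlt : surplus b p j < maxSurplus b p := by
        have hjD' : ¬ Demands b p j := fun h => hjD (by
          simp only [demandedSet, Finset.mem_filter, Finset.mem_univ, true_and]; exact h)
        simp only [Demands, not_forall, not_le] at hjD'
        obtain ⟨k, hk⟩ := hjD'
        exact lt_of_lt_of_le hk (Finset.le_sup' _ (Finset.mem_univ k))
      obtain ⟨j0, _, hj0⟩ := Finset.exists_mem_eq_sup' (Finset.univ_nonempty) (surplus b p)
      obtain ⟨m1, e1⟩ := surplus_int hb hp j
      obtain ⟨m2, e2⟩ := surplus_int hb hp j0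
      have hMeq : maxSurplus b p = (m2 : ℝ) := by rw [maxSurplus, hj0, e2]
      have hgap : surplus b p j + 1 ≤ maxSurplus b p := by
        rw [e1, hMeq]
        have : m1 < m2 := by exact_mod_cast e1 ▸ hMeq ▸ hlt
        exact_mod_cast this
      obtain ⟨k, hkD⟩ := demandedSet_nonempty b p
      have h1 : |extVec p j - extVec q j| ≤ ‖q - p‖ := extVec_abs_le j
      have h2 : |extVec p k - extVec q k| ≤ ‖q - p‖ := extVec_abs_le k
      have hSk : extVec p k - extVec q k ≤ (demandedSet b p).sup' (demandedSet_nonempty b p)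
          (fun j => extVec p j - extVec q j) := Finset.le_sup' (fun j => extVec p j - extVec q j) hkD
      rw [hkey]
      rw [abs_le] at h1 h2
      linarith
  · obtain ⟨k, hkD, hkS⟩ := Finset.exists_mem_eq_sup' (demandedSet_nonempty b p)
      (fun j => extVec p j - extVec q j)
    have hval : surplus b q k = maxSurplus b p + (extVec p k - extVec q k) := by
      have h := surplus_mem_demanded hkD
      simp only [surplus] at h ⊢
      rw [← h]; ring
    rw [hkS, ← hval]
    exact Finset.le_sup' (surplus b q) (Finset.mem_univ k)

/-- The homogeneous part of the indirect utility near `p`. -/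
def gFun (B : List ((Fin n → ℝ) × ℝ)) (p : Fin n → ℝ) (v : Fin n → ℝ) : ℝ :=
  (B.map fun bw => bw.2 * (demandedSet bw.1 p).sup' (demandedSet_nonempty bw.1 p)
      (fun j => -extVec v j)).sum

lemma sup'_mul_left {α : Type*} {s : Finset α} (hs : s.Nonempty) (f : α → ℝ) {c : ℝ}
    (hc : 0 ≤ c) : (s.sup' hs fun j => c * f j) = c * s.sup' hs f := by
  refine le_antisymm (Finset.sup'_le _ _ fun j hj =>
    mul_le_mul_of_nonneg_left (Finset.le_sup' f hj) hc) ?_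
  obtain ⟨j0, hj0, hEq⟩ := Finset.exists_mem_eq_sup' hs f
  rw [hEq]
  exact Finset.le_sup' (fun j => c * f j) hj0

lemma extVec_smul (t : ℝ) (v : Fin n → ℝ) (j : Fin (n + 1)) :
    extVec (t • v) j = t * extVec v j := by
  induction j using Fin.cases with
  | zero => simp [extVec]
  | succ k => simp [extVec]

lemma gFun_smul (B : List ((Fin n → ℝ) × ℝ)) (p : Fin n → ℝ) {t : ℝ} (ht : 0 ≤ t)
    (v : Fin n → ℝ) : gFun B p (t • v) = t * gFun B p v := by
  induction B with
  | nil => simp [gFun]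
  | cons bw B ih =>
    simp only [gFun, List.map_cons, List.sum_cons] at ih ⊢
    rw [ih]
    have : ((demandedSet bw.1 p).sup' (demandedSet_nonempty bw.1 p)
        (fun j => -extVec (t • v) j)) = t * (demandedSet bw.1 p).sup'
          (demandedSet_nonempty bw.1 p) (fun j => -extVec v j) := by
      rw [← sup'_mul_left (demandedSet_nonempty bw.1 p) (fun j => -extVec v j) ht]
      refine Finset.sup'_congr _ rfl fun j _ => by rw [extVec_smul]; ring
    rw [this]; ring

/-- Decomposition of the indirect utility near `p`. -/
lemma indirectUtility_eq (B : List ((Fin n → ℝ) × ℝ))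
    (hint : ∀ bw ∈ B, ∀ k, ∃ m : ℤ, bw.1 k = (m : ℝ))
    {p : Fin n → ℝ} (hp : ∀ k, ∃ m : ℤ, p k = (m : ℝ))
    {q : Fin n → ℝ} (hq : ‖q - p‖ < 1 / 2) :
    indirectUtility B q = indirectUtility B p + gFun B p (q - p) := by
  induction B with
  | nil => simp [indirectUtility, gFun]
  | cons bw B ih =>
    have h1 := ih (fun b hb => hint b (List.mem_cons_of_mem _ hb))
    simp only [indirectUtility, gFun, List.map_cons, List.sum_cons] at h1 ⊢
    rw [h1]
    have h2 := maxSurplus_eq (hint bw List.mem_cons_self) hp hq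
    have h3 : ((demandedSet bw.1 p).sup' (demandedSet_nonempty bw.1 p)
        (fun j => extVec p j - extVec q j)) = (demandedSet bw.1 p).sup'
          (demandedSet_nonempty bw.1 p) (fun j => -extVec (q - p) j) := by
      refine Finset.sup'_congr _ rfl fun j _ => ?_
      induction j using Fin.cases with
      | zero => simp [extVec]
      | succ k => simp [extVec]
    rw [h2, h3]
    ring

lemma ball_convex (p : Fin n → ℝ) (r : ℝ) : Convex ℝ {q : Fin n → ℝ | ‖q - p‖ < r} := by
  have : {q : Fin n → ℝ | ‖q - p‖ < r} = Metric.ball p r := by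
    ext x; simp [Metric.mem_ball, dist_eq_norm]
  rw [this]
  exact convex_ball p r

/-- Core: local validity at integral `p` upgrades to `1/2`-validity. -/
lemma core_valid (B : List ((Fin n → ℝ) × ℝ))
    (hint : ∀ bw ∈ B, ∀ k, ∃ m : ℤ, bw.1 k = (m : ℝ))
    {p : Fin n → ℝ} (hp : ∀ k, ∃ m : ℤ, p k = (m : ℝ))
    (hvalid : ∃ δ > 0, epsValid B p δ) : epsValid B p (1 / 2) := by
  obtain ⟨δ, hδ, hcv⟩ := hvalid
  set t := min δ (1 / 2) / 2 with ht_def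
  have ht0 : 0 < t := by positivity
  have htδ : t < δ := by
    rcases le_total δ (1 / 2) with h | h
    · simp only [ht_def, min_eq_left h]; linarith
    · simp only [ht_def, min_eq_right h]; linarith
  have ht1 : t ≤ 1 := by
    have : min δ (1 / 2) ≤ 1 / 2 := min_le_right _ _
    simp only [ht_def]; linarith
  constructor
  · exact ball_convex p (1 / 2)
  · intro x hx y hy a b ha hb hab
    simp only [Set.mem_setOf_eq] at hx hy
    have hz : ‖a • x + b • y - p‖ < 1 / 2 := ball_convex p (1 / 2) hx hy ha hb hab
    -- points scaled towards p
    have hmem : ∀ w : Fin n → ℝ, ‖w - p‖ < 1 / 2 → p + t • (w - p) ∈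
        {q : Fin n → ℝ | ‖q - p‖ < δ} := by
      intro w hw
      simp only [Set.mem_setOf_eq, add_sub_cancel_left, norm_smul, Real.norm_eq_abs,
        abs_of_pos ht0]
      calc t * ‖w - p‖ ≤ t * (1 / 2) := by
            exact mul_le_mul_of_nonneg_left hw.le ht0.le
        _ < δ := by
            rcases le_total δ (1 / 2) with h | h
            · simp only [ht_def, min_eq_left h]; nlinarith
            · simp only [ht_def, min_eq_right h]; nlinarith
    have hx' := hmem x hx
    have hy' := hmem y hy
    have hineq := hcv.2 hx' hy' ha hb hab
    have hpt : a • (p + t • (x - p)) + b • (p + t • (y - p)) =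
        p + t • (a • x + b • y - p) := by
      have hb' : b = 1 - a := by linarith
      subst hb'
      module
    rw [hpt] at hineq
    -- rewrite all three values via the decomposition
    have key : ∀ w : Fin n → ℝ, ‖w - p‖ < 1 / 2 →
        indirectUtility B (p + t • (w - p)) =
          indirectUtility B p + t * gFun B p (w - p) := by
      intro w hw
      have hball : ‖(p + t • (w - p)) - p‖ < 1 / 2 := by
        simp only [add_sub_cancel_left, norm_smul, Real.norm_eq_abs, abs_of_pos ht0]
        calc t * ‖w - p‖ ≤ 1 * ‖w - p‖ :=
              mul_le_mul_of_nonneg_right ht1 (norm_nonneg _)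
          _ = ‖w - p‖ := one_mul _
          _ < 1 / 2 := hw
      rw [indirectUtility_eq B hint hp hball, add_sub_cancel_left,
        gFun_smul B p ht0.le]
    rw [key x hx, key y hy, key _ hz] at hineq
    have hgineq : gFun B p (a • x + b • y - p) ≤
        a * gFun B p (x - p) + b * gFun B p (y - p) := by
      have hc : a * (indirectUtility B p) + b * (indirectUtility B p) =
          indirectUtility B p := by rw [← add_mul, hab, one_mul]
      have h4 : t * gFun B p (a • x + b • y - p) ≤
          t * (a * gFun B p (x - p) + b * gFun B p (y - p)) := by
        simp only [smul_eq_mul] at hineq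
        nlinarith [hineq, hc]
      exact le_of_mul_le_mul_left h4 ht0
    rw [indirectUtility_eq B hint hp hz, indirectUtility_eq B hint hp hx,
      indirectUtility_eq B hint hp hy]
    have : a * (indirectUtility B p) + b * (indirectUtility B p) =
        indirectUtility B p := by rw [← add_mul, hab, one_mul]
    simp only [smul_eq_mul]
    nlinarith [hgineq, this]


lemma convexOn_sub_const {s : Set (Fin n → ℝ)} {f : (Fin n → ℝ) → ℝ}
    (h : ConvexOn ℝ s f) (v : Fin n → ℝ) :
    ConvexOn ℝ {x : Fin n → ℝ | x - v ∈ s} (fun x => f (x - v)) := by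
  constructor
  · intro x hx y hy a b ha hb hab
    simp only [Set.mem_setOf_eq] at hx hy ⊢
    have heq : a • x + b • y - v = a • (x - v) + b • (y - v) := by
      have hb' : b = 1 - a := by linarith
      subst hb'; module
    rw [heq]; exact h.1 hx hy ha hb hab
  · intro x hx y hy a b ha hb hab
    simp only [Set.mem_setOf_eq] at hx hy
    have heq : a • x + b • y - v = a • (x - v) + b • (y - v) := by
      have hb' : b = 1 - a := by linarith
      subst hb'; module
    show f (a • x + b • y - v) ≤ a • f (x - v) + b • f (y - v)
    rw [heq]; exact h.2 hx hy ha hb hab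

lemma indirectUtility_shift (B : List ((Fin n → ℝ) × ℝ)) (i : Fin n) (ε : ℝ)
    (x : Fin n → ℝ) :
    indirectUtility (B.map fun bw => (fun k => bw.1 k + if k = i then ε else 0, bw.2)) x
      = indirectUtility B (x - fun k => if k = i then ε else 0) := by
  simp only [indirectUtility, List.map_map]
  congr 1
  refine List.map_congr_left fun bw _ => ?_
  simp only [Function.comp_apply]
  congr 1
  unfold maxSurplus
  refine Finset.sup'_congr _ rfl fun j _ => ?_
  induction j using Fin.cases with
  | zero => simp [surplus, extVec]
  | succ k =>
    simp only [surplus, extVec, Fin.cons_succ, Pi.sub_apply]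
    ring

lemma shift_norm_le (i : Fin n) (ε : ℝ) :
    ‖(fun k => if k = i then ε else 0 : Fin n → ℝ)‖ ≤ |ε| := by
  refine pi_norm_le_iff_of_nonneg (abs_nonneg ε) |>.mpr fun k => ?_
  by_cases h : k = i <;> simp [h, Real.norm_eq_abs, abs_nonneg]

/-- Let `B` be a list of bids with integral value vectors, `p ∈ ℤ^n`, and
suppose `B` is locally valid at `p`. Fix a good `i` and `ε` with `0 < |ε| < 1/4`. Then
(a) `B` is `(1/2 − |ε|)`-valid at every `q` with `‖q − p‖_∞ < |ε|`; and (b) the bid list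
obtained by shifting every bid of `B` by `ε·e^i` is `(1/2 − 2|ε|)`-valid at every such `q`. -/

theorem stmt7 (n : ℕ) (hn : 1 ≤ n) (B : List ((Fin n → ℝ) × ℝ))
    (hw : ∀ bw ∈ B, bw.2 = 1 ∨ bw.2 = -1)
    (hint : ∀ bw ∈ B, ∀ k, ∃ m : ℤ, bw.1 k = m)
    (p : Fin n → ℝ) (hp : ∀ k, ∃ m : ℤ, p k = m)
    (hvalid : ∃ δ > 0, epsValid B p δ)
    (i : Fin n) (ε : ℝ) (hε0 : ε ≠ 0) (hε : |ε| < 1 / 4) :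
    (∀ q : Fin n → ℝ, ‖q - p‖ < |ε| → epsValid B q (1 / 2 - |ε|)) ∧
    (∀ q : Fin n → ℝ, ‖q - p‖ < |ε| →
      epsValid (B.map fun bw => (fun k => bw.1 k + if k = i then ε else 0, bw.2)) q
        (1 / 2 - 2 * |ε|)) := by
  have hcore : epsValid B p (1 / 2) := core_valid B hint hp hvalid
  have hεpos : 0 < |ε| := abs_pos.mpr hε0
  constructor
  · intro q hq
    refine hcore.subset ?_ (ball_convex q _)
    intro x hx
    simp only [Set.mem_setOf_eq] at hx ⊢
    have h1 : ‖x - p‖ ≤ ‖x - q‖ + ‖q - p‖ := by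
      have := norm_add_le (x - q) (q - p)
      simpa [sub_add_sub_cancel] using this
    linarith
  · intro q hq
    have hTrans := convexOn_sub_const hcore (fun k => if k = i then ε else 0)
    have hfun : indirectUtility
        (B.map fun bw => (fun k => bw.1 k + if k = i then ε else 0, bw.2))
        = fun x => indirectUtility B (x - fun k => if k = i then ε else 0) :=
      funext fun x => indirectUtility_shift B i ε x
    unfold epsValid
    rw [hfun]
    refine hTrans.subset ?_ (ball_convex q _)
    intro x hx
    simp only [Set.mem_setOf_eq] at hx ⊢
    have hv := shift_norm_le i ε
    have heq : x - (fun k => if k = i then ε else 0) - p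
        = (x - q) + (q - p) + (-(fun k => if k = i then ε else 0)) := by abel
    rw [heq]
    calc ‖(x - q) + (q - p) + (-(fun k => if k = i then ε else 0 : Fin n → ℝ))‖
        ≤ ‖(x - q) + (q - p)‖ + ‖(-(fun k => if k = i then ε else 0 : Fin n → ℝ))‖ :=
          norm_add_le _ _
      _ ≤ ‖x - q‖ + ‖q - p‖ + ‖(fun k => if k = i then ε else 0 : Fin n → ℝ)‖ := by
          rw [norm_neg]
          exact add_le_add_left (norm_add_le _ _) _
      _ < 1 / 2 := by linarith


end
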